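/- Let Λ = kQ(n)/⟨all paths of length n−1⟩ be the cluster-tilted algebra of the cyclic quiver Q(n) with vertices 1,...,n and arrows i → i+1 (indices mod n). For indecomposable modules X(i,j) with i ∈ Z/nZ and 1 ≤ j, ℓ < n−1, if Ext¹_Λ(X(k,ℓ), X(i,j)) ≠ 0 and supp(X(i,j)) ∩ supp(X(k,ℓ)) = ∅, then the unique nonsplit extension has middle term X(i, j+ℓ), i.e., there is an exact sequence 0 → X(i,j) → X(i,j+ℓ) → X(k,ℓ) → 0 and necessarily k = i − j mod n. -/

import Mathlib

universe u v

/-- A representation of a quiver with vertex set `ι` and (at most simple) arrows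
given by the relation `Q` over the field `k`. -/
structure QuivRep (k : Type u) [Field k] (ι : Type v) (Q : ι → ι → Prop) where
  V : ι → Type u
  acg : ∀ i, AddCommGroup (V i)
  mod : ∀ i, Module k (V i)
  φ : ∀ i j, Q i j → (V i →ₗ[k] V j)

attribute [instance] QuivRep.acg QuivRep.mod

/-- A morphism of quiver representations. -/
structure QuivRepHom {k : Type u} [Field k] {ι : Type v} {Q : ι → ι → Prop}
    (M N : QuivRep k ι Q) where
  app : ∀ i, M.V i →ₗ[k] N.V i
  comm : ∀ i j (h : Q i j), (N.φ i j h).comp (app i) = (app j).comp (M.φ i j h)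

/-- `0 → A → B → C → 0` is a short exact sequence of quiver representations. -/
def IsSES {k : Type u} [Field k] {ι : Type v} {Q : ι → ι → Prop}
    {A B C : QuivRep k ι Q} (f : QuivRepHom A B) (g : QuivRepHom B C) : Prop :=
  (∀ i, Function.Injective (f.app i)) ∧ (∀ i, Function.Surjective (g.app i)) ∧
  (∀ i, LinearMap.range (f.app i) = LinearMap.ker (g.app i))

/-- The short exact sequence `0 → A → B → C → 0` determined by `f` splits. -/
def IsSplit {k : Type u} [Field k] {ι : Type v} {Q : ι → ι → Prop}
    {A B : QuivRep k ι Q} (f : QuivRepHom A B) : Prop :=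
  ∃ r : QuivRepHom B A, ∀ i (x : A.V i), r.app i (f.app i x) = x

/-- All vector spaces of the representation are finite-dimensional. -/
def FinDimRep {k : Type u} [Field k] {ι : Type v} {Q : ι → ι → Prop}
    (M : QuivRep k ι Q) : Prop :=
  ∀ i, FiniteDimensional k (M.V i)

/-- The representation is indecomposable: it is nonzero and its only idempotent
endomorphisms are `0` and the identity. -/
def Indec {k : Type u} [Field k] {ι : Type v} {Q : ι → ι → Prop}
    (M : QuivRep k ι Q) : Prop :=
  (∃ i, ∃ x : M.V i, x ≠ 0) ∧
  ∀ e : QuivRepHom M M, (∀ i, (e.app i).comp (e.app i) = e.app i) →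
    (∀ i, e.app i = 0) ∨ (∀ i, e.app i = LinearMap.id)

/-- `dim Ext¹(X, Y) ≤ 1`, expressed concretely: any two nonsplit extensions of `X`
by `Y` are equivalent up to rescaling by a nonzero scalar `c` (i.e. their classes
are proportional in `Ext¹(X, Y)`). -/
def ExtDimLeOne {k : Type u} [Field k] {ι : Type v} {Q : ι → ι → Prop}
    (X Y : QuivRep k ι Q) : Prop :=
  ∀ (Z₁ Z₂ : QuivRep k ι Q) (f₁ : QuivRepHom Y Z₁) (g₁ : QuivRepHom Z₁ X)
    (f₂ : QuivRepHom Y Z₂) (g₂ : QuivRepHom Z₂ X),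
    IsSES f₁ g₁ → IsSES f₂ g₂ → ¬ IsSplit f₁ → ¬ IsSplit f₂ →
    ∃ c : k, c ≠ 0 ∧ ∃ θ : QuivRepHom Z₁ Z₂,
      (∀ i, Function.Bijective (θ.app i)) ∧
      (∀ i (y : Y.V i), θ.app i (f₁.app i y) = f₂.app i (c • y)) ∧
      (∀ i (z : Z₁.V i), g₂.app i (θ.app i z) = g₁.app i z)

/-! ### Type `A` quivers and cluster-tilted relations -/

/-- The underlying graph of a quiver. -/
def UnderlyingGraph {m : ℕ} (Q : Fin m → Fin m → Prop) : SimpleGraph (Fin m) where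
  Adj i j := i ≠ j ∧ (Q i j ∨ Q j i)
  symm := ⟨fun _ _ h => ⟨h.1.symm, h.2.symm⟩⟩
  loopless := ⟨fun _ h => h.1 rfl⟩

/-- The Buan–Vatne characterization of type `A` quivers: a loopless, 2-cycle-free
quiver all of whose cycles are oriented 3-cycles, each vertex has at most four
neighbors, the four arrows at a 4-valent vertex pair into two 3-cycles, and at a
3-valent vertex two arrows lie in a 3-cycle while the third lies in no 3-cycle. -/
def IsTypeA {m : ℕ} (Q : Fin m → Fin m → Prop) : Prop :=
  (∀ i, ¬ Q i i) ∧ (∀ i j, Q i j → ¬ Q j i) ∧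
  (∀ (v : Fin m) (c : (UnderlyingGraph Q).Walk v v), c.IsCycle → c.length = 3) ∧
  (∀ a b c : Fin m, (UnderlyingGraph Q).Adj a b → (UnderlyingGraph Q).Adj b c →
    (UnderlyingGraph Q).Adj c a →
    (Q a b ∧ Q b c ∧ Q c a) ∨ (Q b a ∧ Q c b ∧ Q a c)) ∧
  (∀ v, ((UnderlyingGraph Q).neighborSet v).ncard ≤ 4) ∧
  (∀ v, ((UnderlyingGraph Q).neighborSet v).ncard = 4 →
    ∃ a b c d : Fin m, ({a, b, c, d} : Set (Fin m)) = (UnderlyingGraph Q).neighborSet v ∧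
      a ≠ b ∧ a ≠ c ∧ a ≠ d ∧ b ≠ c ∧ b ≠ d ∧ c ≠ d ∧
      (UnderlyingGraph Q).Adj a b ∧ (UnderlyingGraph Q).Adj c d) ∧
  (∀ v, ((UnderlyingGraph Q).neighborSet v).ncard = 3 →
    ∃ a b c : Fin m, ({a, b, c} : Set (Fin m)) = (UnderlyingGraph Q).neighborSet v ∧
      a ≠ b ∧ a ≠ c ∧ b ≠ c ∧ (UnderlyingGraph Q).Adj a b ∧
      ∀ w, (UnderlyingGraph Q).Adj c w → ¬ (UnderlyingGraph Q).Adj v w)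

/-- The representation satisfies the relations of the type `A` cluster-tilted
algebra: the composition of any two consecutive arrows of a 3-cycle vanishes. -/
def TypeARel {k : Type u} [Field k] {m : ℕ} {Q : Fin m → Fin m → Prop}
    (M : QuivRep k (Fin m) Q) : Prop :=
  ∀ (a b c : Fin m) (hab : Q a b) (hbc : Q b c) (_hca : Q c a),
    (M.φ b c hbc).comp (M.φ a b hab) = 0

/-! ### The cyclic quiver `Q(n)` -/

/-- The cyclic quiver `Q(n)`: vertex set `ZMod n`, arrows `i → i + 1`. -/
def CycQ (n : ℕ) : ZMod n → ZMod n → Prop := fun i j => j = i + 1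

/-- Transport a representation space along an equality of vertices. -/
def castHom {k : Type u} [Field k] {ι : Type v} {Q : ι → ι → Prop}
    (M : QuivRep k ι Q) {a b : ι} (h : a = b) : M.V a →ₗ[k] M.V b :=
  Eq.rec (motive := fun c _ => M.V a →ₗ[k] M.V c) LinearMap.id h

/-- The composite of `t` consecutive arrow maps starting at vertex `v`. -/
def cycComp {k : Type u} [Field k] {n : ℕ} (M : QuivRep k (ZMod n) (CycQ n)) :
    ∀ (t : ℕ) (v : ZMod n), M.V v →ₗ[k] M.V (v + (t : ZMod n))
  | 0, v => castHom M (show v = v + ((0 : ℕ) : ZMod n) by push_cast; ring)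
  | (t + 1), v =>
      (castHom M
        (show v + (t : ZMod n) + 1 = v + (((t + 1 : ℕ)) : ZMod n) by push_cast; ring)).comp
      ((M.φ (v + (t : ZMod n)) (v + (t : ZMod n) + 1) rfl).comp (cycComp M t v))

/-- The relations of the cluster-tilted algebra of `Q(n)`: every path of length
`n - 1` acts by zero. -/
def CycRel {k : Type u} [Field k] {n : ℕ} (M : QuivRep k (ZMod n) (CycQ n)) : Prop :=
  ∀ v : ZMod n, cycComp M (n - 1) v = 0

/-- The support of the string module `X(i, j)` over the cluster-tilted algebra of
`Q(n)`: the cyclic interval `{i, i-1, …, i-j+1}` in `ZMod n`. -/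
def inSupp (n i j : ℕ) (v : ZMod n) : Prop :=
  ∃ t : ℕ, t < j ∧ v = (i : ZMod n) - (t : ZMod n)

/-- `M` is (isomorphic to) the indecomposable string module `X(i, j)`: it is
one-dimensional on the cyclic interval `{i-j+1, …, i}`, zero elsewhere, and the
arrow maps within the support (pointing towards the top vertex `i`) are
injective. -/
def IsStringX {k : Type u} [Field k] {n : ℕ}
    (M : QuivRep k (ZMod n) (CycQ n)) (i j : ℕ) : Prop :=
  (∀ v : ZMod n, inSupp n i j v → Module.finrank k (M.V v) = 1) ∧
  (∀ v : ZMod n, ¬ inSupp n i j v → ∀ x : M.V v, x = 0) ∧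
  (∀ v : ZMod n, inSupp n i j v → inSupp n i j (v + 1) →
    Function.Injective (M.φ v (v + 1) rfl))

section Helpers

open Function Module

variable {k : Type u} [Field k]

lemma inj_of_one_dim {V W : Type u} [AddCommGroup V] [Module k V] [AddCommGroup W] [Module k W]
    (hV : Module.finrank k V = 1) {φ : V →ₗ[k] W} (hφ : φ ≠ 0) : Function.Injective φ := by
  rw [← LinearMap.ker_eq_bot]
  by_contra hk
  obtain ⟨x, hxk, hx0⟩ := Submodule.exists_mem_ne_zero_of_ne_bot hk
  apply hφ
  ext w
  obtain ⟨c, rfl⟩ := (finrank_eq_one_iff_of_nonzero' x hx0).mp hV w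
  simp [LinearMap.mem_ker.mp hxk]

variable {n : ℕ} {A B C : QuivRep k (ZMod n) (CycQ n)} {f : QuivRepHom A B} {g : QuivRepHom B C}

lemma f_bij (hses : IsSES f g) (v : ZMod n) (hC : ∀ x : C.V v, x = 0) :
    Function.Bijective (f.app v) := by
  refine ⟨hses.1 v, fun x => ?_⟩
  have hx : x ∈ LinearMap.ker (g.app v) := by
    simp [LinearMap.mem_ker, hC (g.app v x)]
  rw [← hses.2.2 v] at hx
  exact hx

lemma g_bij (hses : IsSES f g) (v : ZMod n) (hA : ∀ x : A.V v, x = 0) :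
    Function.Bijective (g.app v) := by
  refine ⟨?_, hses.2.1 v⟩
  rw [← LinearMap.ker_eq_bot, ← hses.2.2 v]
  rw [Submodule.eq_bot_iff]
  rintro x ⟨y, rfl⟩
  rw [hA y, map_zero]

lemma B_triv (hses : IsSES f g) (v : ZMod n) (hA : ∀ x : A.V v, x = 0)
    (hC : ∀ x : C.V v, x = 0) : ∀ x : B.V v, x = 0 := by
  intro x
  obtain ⟨y, rfl⟩ := (f_bij hses v hC).2 x
  rw [hA y, map_zero]

lemma inj_a (hses : IsSES f g) (v : ZMod n) (hCv : ∀ x : C.V v, x = 0)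
    (hA : Function.Injective (A.φ v (v+1) rfl)) :
    Function.Injective (B.φ v (v+1) rfl) := by
  intro x y hxy
  obtain ⟨x', rfl⟩ := (f_bij hses v hCv).2 x
  obtain ⟨y', rfl⟩ := (f_bij hses v hCv).2 y
  have hcx := LinearMap.congr_fun (f.comm v (v+1) rfl) x'
  have hcy := LinearMap.congr_fun (f.comm v (v+1) rfl) y'
  simp only [LinearMap.comp_apply] at hcx hcy
  rw [hcx, hcy] at hxy
  exact congrArg _ (hA (hses.1 (v+1) hxy))

lemma inj_b (hses : IsSES f g) (v : ZMod n) (hAv : ∀ x : A.V v, x = 0)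
    (hC : Function.Injective (C.φ v (v+1) rfl)) :
    Function.Injective (B.φ v (v+1) rfl) := by
  intro x y hxy
  apply (g_bij hses v hAv).1
  apply hC
  have hcx := LinearMap.congr_fun (g.comm v (v+1) rfl) x
  have hcy := LinearMap.congr_fun (g.comm v (v+1) rfl) y
  simp only [LinearMap.comp_apply] at hcx hcy
  rw [hcx, hcy, hxy]

lemma castHom_inj {M : QuivRep k (ZMod n) (CycQ n)} {a b : ZMod n} (h : a = b) :
    Function.Injective (castHom M h) := by
  subst h; exact fun x y hh => hh

lemma cycComp_inj (M : QuivRep k (ZMod n) (CycQ n)) (m : ℕ) (v : ZMod n)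
    (h : ∀ s : ℕ, s < m →
      Function.Injective (M.φ (v + (s : ZMod n)) (v + (s : ZMod n) + 1) rfl)) :
    Function.Injective (cycComp M m v) := by
  induction m with
  | zero => exact castHom_inj _
  | succ t ih =>
    show Function.Injective
      ((castHom M _).comp ((M.φ _ _ rfl).comp (cycComp M t v)))
    simp only [LinearMap.coe_comp]
    exact (castHom_inj _).comp ((h t (Nat.lt_succ_self t)).comp
      (ih fun s hs => h s (hs.trans (Nat.lt_succ_self t))))

lemma split_of_noconn {i j : ℕ} (hses : IsSES f g)
    (hij2 : ∀ v : ZMod n, ¬ inSupp n i j v → ∀ x : A.V v, x = 0)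
    (hklz : ∀ v : ZMod n, inSupp n i j v → ∀ x : C.V v, x = 0)
    (hconn : ∀ v : ZMod n, ¬ inSupp n i j v → inSupp n i j (v+1) →
      B.φ v (v+1) rfl = 0) :
    IsSplit f := by
  classical
  let e : (v : ZMod n) → inSupp n i j v → (A.V v ≃ₗ[k] B.V v) := fun v h =>
    LinearEquiv.ofBijective (f.app v) (f_bij hses v (hklz v h))
  let r : (v : ZMod n) → B.V v →ₗ[k] A.V v := fun v =>
    if h : inSupp n i j v then ((e v h).symm : B.V v →ₗ[k] A.V v) else 0
  have happ : ∀ v (h : inSupp n i j v) (y : A.V v), r v (f.app v y) = y := by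
    intro v h y
    simp only [r, dif_pos h]
    show (e v h).symm (f.app v y) = y
    rw [LinearEquiv.symm_apply_eq]
    exact (LinearEquiv.ofBijective_apply _ _).symm
  refine ⟨⟨r, ?_⟩, fun v x => ?_⟩
  · intro v w hq
    have hw : w = v + 1 := hq
    subst hw
    show (A.φ v (v+1) rfl).comp (r v) = (r (v+1)).comp (B.φ v (v+1) rfl)
    ext x
    simp only [LinearMap.comp_apply]
    by_cases hv1 : inSupp n i j (v+1)
    · by_cases hv : inSupp n i j v
      · obtain ⟨y, rfl⟩ := (f_bij hses v (hklz v hv)).2 x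
        rw [happ v hv y]
        have hc := LinearMap.congr_fun (f.comm v (v+1) rfl) y
        simp only [LinearMap.comp_apply] at hc
        rw [hc, happ (v+1) hv1]
      · rw [hij2 v hv (r v x), map_zero, hconn v hv hv1]
        simp [r, dif_pos hv1]
    · exact (hij2 (v+1) hv1 _).trans (hij2 (v+1) hv1 _).symm
  · by_cases hv : inSupp n i j v
    · exact happ v hv x
    · rw [hij2 v hv x, map_zero]
      exact map_zero _

end Helpers

/-- Let `Λ = kQ(n)/⟨paths of length n-1⟩`.  For indecomposables
`X(i,j)`, `X(κ,ℓ)` with `1 ≤ j, ℓ < n - 1`, if `Ext¹(X(κ,ℓ), X(i,j)) ≠ 0` (i.e.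
some nonsplit extension `0 → X(i,j) → Z → X(κ,ℓ) → 0` exists) and the supports of
`X(i,j)` and `X(κ,ℓ)` are disjoint, then necessarily `κ = i - j (mod n)` and the
unique nonsplit extension has middle term `X(i, j+ℓ)`: every such nonsplit
extension has middle term isomorphic to `X(i, j+ℓ)`. -/
theorem stmt15 (k : Type u) [Field k] (n i κ j ℓ : ℕ) (hn : 3 ≤ n)
    (hj : 1 ≤ j) (hj' : j < n - 1) (hℓ : 1 ≤ ℓ) (hℓ' : ℓ < n - 1)
    (Mij Mkl : QuivRep k (ZMod n) (CycQ n))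
    (hMij : IsStringX Mij i j) (hMkl : IsStringX Mkl κ ℓ)
    (hrel₁ : CycRel Mij) (hrel₂ : CycRel Mkl)
    (hext : ∃ (Z : QuivRep k (ZMod n) (CycQ n)) (f : QuivRepHom Mij Z)
      (g : QuivRepHom Z Mkl), CycRel Z ∧ IsSES f g ∧ ¬ IsSplit f)
    (hdisj : ∀ v : ZMod n, ¬ (inSupp n i j v ∧ inSupp n κ ℓ v)) :
    (κ : ZMod n) = (i : ZMod n) - (j : ZMod n) ∧
    ∀ (Z : QuivRep k (ZMod n) (CycQ n)) (f : QuivRepHom Mij Z)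
      (g : QuivRepHom Z Mkl), CycRel Z → IsSES f g → ¬ IsSplit f →
      IsStringX Z i (j + ℓ) := by
  classical
  have hcast : ∀ a b : ℕ, a < n → b < n → ((a : ZMod n) = (b : ZMod n)) → a = b := by
    intro a b ha hb hab
    haveI : NeZero n := ⟨by omega⟩
    rw [← ZMod.val_cast_of_lt ha, ← ZMod.val_cast_of_lt hb, hab]
  have hndvd : ∀ a : ℕ, 0 < a → a < n → ((a : ℕ) : ZMod n) ≠ 0 := by
    intro a h0 h1 h
    have hd := (ZMod.natCast_eq_zero_iff a n).mp h
    exact absurd (Nat.le_of_dvd h0 hd) (by omega)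
  have hconnpos : ∀ v : ZMod n, ¬ inSupp n i j v → inSupp n i j (v + 1) →
      v = (i : ZMod n) - (j : ZMod n) := by
    rintro v hv ⟨t, ht, hvt⟩
    have hv' : v = (i : ZMod n) - ((t + 1 : ℕ) : ZMod n) := by
      push_cast
      linear_combination hvt
    rcases Nat.lt_or_ge (t + 1) j with h | h
    · exact absurd ⟨t + 1, h, hv'⟩ hv
    · have hje : t + 1 = j := by omega
      rw [hje] at hv'
      exact hv'
  have hkey : ∀ (Z : QuivRep k (ZMod n) (CycQ n)) (f : QuivRepHom Mij Z)
      (g : QuivRepHom Z Mkl), IsSES f g → ¬ IsSplit f →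
      Z.φ ((i : ZMod n) - (j : ZMod n)) ((i : ZMod n) - (j : ZMod n) + 1) rfl ≠ 0 := by
    intro Z f g hses hns h0
    apply hns
    apply split_of_noconn hses hMij.2.1
      (fun v hv => hMkl.2.1 v (fun hk => hdisj v ⟨hv, hk⟩))
    intro v hv hv1
    obtain rfl := hconnpos v hv hv1
    exact h0
  obtain ⟨Z₀, f₀, g₀, hrel₀, hses₀, hns₀⟩ := hext
  have hZ0 := hkey Z₀ f₀ g₀ hses₀ hns₀
  have hIJnot : ¬ inSupp n i j ((i : ZMod n) - (j : ZMod n)) := by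
    rintro ⟨t, ht, hEq⟩
    have hjt : (j : ZMod n) = (t : ZMod n) := sub_right_inj.mp hEq
    have := hcast j t (by omega) (by omega) hjt
    omega
  have hIJk : inSupp n κ ℓ ((i : ZMod n) - (j : ZMod n)) := by
    by_contra hc
    apply hZ0
    ext x
    have hx := B_triv hses₀ _ (hMij.2.1 _ hIJnot) (hMkl.2.1 _ hc) x
    simp [hx]
  obtain ⟨s, hs, hEq⟩ := hIJk
  have hs0 : s = 0 := by
    by_contra hsne
    obtain ⟨s', rfl⟩ : ∃ s', s = s' + 1 := ⟨s - 1, by omega⟩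
    obtain ⟨j', rfl⟩ : ∃ j', j = j' + 1 := ⟨j - 1, by omega⟩
    apply hdisj ((i : ZMod n) - ((j' : ℕ) : ZMod n))
    constructor
    · exact ⟨j', by omega, rfl⟩
    · refine ⟨s', by omega, ?_⟩
      push_cast at hEq ⊢
      linear_combination hEq
  subst hs0
  have hK : (κ : ZMod n) = (i : ZMod n) - (j : ZMod n) := by
    simpa using hEq.symm
  refine ⟨hK, ?_⟩
  have hjl : j + ℓ ≤ n := by
    by_contra hc
    push_neg at hc
    apply hdisj (i : ZMod n)
    refine ⟨⟨0, by omega, by simp⟩, ⟨n - j, by omega, ?_⟩⟩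
    rw [hK]
    have hnj : ((n - j : ℕ) : ZMod n) = (n : ZMod n) - (j : ZMod n) :=
      Nat.cast_sub (by omega)
    rw [hnj, ZMod.natCast_self]
    ring
  intro Z f g hrelZ hses hns
  have hconnZ := hkey Z f g hses hns
  have hdim : ∀ v : ZMod n, inSupp n i j v ∨ inSupp n κ ℓ v →
      Module.finrank k (Z.V v) = 1 := by
    intro v hv
    rcases hv with hv | hv
    · rw [← hMij.1 v hv]
      exact (LinearEquiv.finrank_eq (LinearEquiv.ofBijective (f.app v)
        (f_bij hses v (hMkl.2.1 v fun hk => hdisj v ⟨hv, hk⟩)))).symm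
    · rw [← hMkl.1 v hv]
      exact LinearEquiv.finrank_eq (LinearEquiv.ofBijective (g.app v)
        (g_bij hses v (hMij.2.1 v fun hk => hdisj v ⟨hk, hv⟩)))
  have hinj3 : ∀ v : ZMod n, v ≠ (i : ZMod n) →
      (inSupp n i j v ∨ inSupp n κ ℓ v) → Function.Injective (Z.φ v (v + 1) rfl) := by
    rintro v hvne (⟨t, ht, rfl⟩ | ⟨u, hu, hveq⟩)
    · obtain ⟨t', rfl⟩ : ∃ t', t = t' + 1 := by
        rcases Nat.eq_zero_or_pos t with h0 | h0
        · exfalso; subst h0; simp at hvne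
        · exact ⟨t - 1, by omega⟩
      have hv1 : (i : ZMod n) - ((t' + 1 : ℕ) : ZMod n) + 1 = (i : ZMod n) - ((t' : ℕ) : ZMod n) := by
        push_cast; ring
      have hsupp : inSupp n i j ((i : ZMod n) - ((t' + 1 : ℕ) : ZMod n) + 1) := by
        rw [hv1]; exact ⟨t', by omega, rfl⟩
      exact inj_a hses _ (hMkl.2.1 _ fun hk => hdisj _ ⟨⟨t' + 1, ht, rfl⟩, hk⟩)
        (hMij.2.2 _ ⟨t' + 1, ht, rfl⟩ hsupp)
    · rcases Nat.eq_zero_or_pos u with h0 | h0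
      · subst h0
        have hvIJ : v = (i : ZMod n) - (j : ZMod n) := by
          rw [hveq, hK]; simp
        subst hvIJ
        exact inj_of_one_dim (hdim _ (Or.inr ⟨0, hℓ, hveq⟩)) hconnZ
      · obtain ⟨u', rfl⟩ : ∃ u', u = u' + 1 := ⟨u - 1, by omega⟩
        have hv1 : v + 1 = (κ : ZMod n) - ((u' : ℕ) : ZMod n) := by
          rw [hveq]; push_cast; ring
        refine inj_b hses v (hMij.2.1 v fun hk => hdisj v ⟨hk, ⟨u' + 1, hu, hveq⟩⟩) ?_
        exact hMkl.2.2 v ⟨u' + 1, hu, hveq⟩ (by rw [hv1]; exact ⟨u', by omega, rfl⟩)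
  have htriv : ∀ v : ZMod n, ¬ inSupp n i j v → ¬ inSupp n κ ℓ v → ∀ x : Z.V v, x = 0 :=
    fun v h1 h2 => B_triv hses v (hMij.2.1 v h1) (hMkl.2.1 v h2)
  have hnen : j + ℓ ≠ n := by
    intro hje
    obtain ⟨ℓ', rfl⟩ : ∃ ℓ', ℓ = ℓ' + 1 := ⟨ℓ - 1, by omega⟩
    have hi1 : inSupp n κ (ℓ' + 1) ((i : ZMod n) + 1) := by
      refine ⟨ℓ', by omega, ?_⟩
      rw [hK]
      have hz : ((j + ℓ' + 1 : ℕ) : ZMod n) = 0 := by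
        rw [show j + ℓ' + 1 = n by omega]; exact ZMod.natCast_self n
      push_cast at hz
      linear_combination hz
    have hfr := hdim _ (Or.inr hi1)
    haveI := Module.nontrivial_of_finrank_pos (R := k) (M := Z.V ((i : ZMod n) + 1))
      (by rw [hfr]; exact one_pos)
    obtain ⟨x, hx⟩ := exists_ne (0 : Z.V ((i : ZMod n) + 1))
    have hinjc : Function.Injective (cycComp Z (n - 1) ((i : ZMod n) + 1)) := by
      apply cycComp_inj
      intro s hs
      apply hinj3
      · intro hvi
        have hz : ((1 + s : ℕ) : ZMod n) = 0 := by
          push_cast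
          linear_combination hvi
        exact hndvd (1 + s) (by omega) (by omega) hz
      · have hts : ((n - 1 - s : ℕ) : ZMod n) = -(1 : ZMod n) - (s : ZMod n) := by
          have hz : ((n - 1 - s + (1 + s) : ℕ) : ZMod n) = 0 := by
            rw [show n - 1 - s + (1 + s) = n by omega]; exact ZMod.natCast_self n
          push_cast at hz
          linear_combination hz
        have hw : (i : ZMod n) + 1 + (s : ZMod n) = (i : ZMod n) - ((n - 1 - s : ℕ) : ZMod n) := by
          rw [hts]; ring
        rcases Nat.lt_or_ge (n - 1 - s) j with hlt | hge
        · exact Or.inl ⟨n - 1 - s, hlt, hw⟩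
        · refine Or.inr ⟨n - 1 - s - j, by omega, ?_⟩
          rw [hK]
          have hc2 : ((n - 1 - s - j : ℕ) : ZMod n) = ((n - 1 - s : ℕ) : ZMod n) - (j : ZMod n) :=
            Nat.cast_sub hge
          rw [hc2, hts]
          ring
    have h0 := hrelZ ((i : ZMod n) + 1)
    apply hx
    apply hinjc
    simp [h0]
  have hjln : j + ℓ < n := lt_of_le_of_ne hjl hnen
  have hcup : ∀ v : ZMod n, inSupp n i (j + ℓ) v → inSupp n i j v ∨ inSupp n κ ℓ v := by
    rintro v ⟨t, ht, rfl⟩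
    rcases Nat.lt_or_ge t j with h | h
    · exact Or.inl ⟨t, h, rfl⟩
    · refine Or.inr ⟨t - j, by omega, ?_⟩
      rw [hK]
      have hc2 : ((t - j : ℕ) : ZMod n) = (t : ZMod n) - (j : ZMod n) := Nat.cast_sub h
      rw [hc2]
      ring
  have hcup' : ∀ v : ZMod n, (inSupp n i j v ∨ inSupp n κ ℓ v) → inSupp n i (j + ℓ) v := by
    rintro v (⟨t, ht, rfl⟩ | ⟨u, hu, hveq⟩)
    · exact ⟨t, by omega, rfl⟩
    · refine ⟨j + u, by omega, ?_⟩
      rw [hveq, hK]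
      push_cast
      ring
  refine ⟨fun v hv => hdim v (hcup v hv), ?_, ?_⟩
  · intro v hv
    exact htriv v (fun h => hv (hcup' v (Or.inl h))) (fun h => hv (hcup' v (Or.inr h)))
  · intro v hv hv1
    apply hinj3 v ?_ (hcup v hv)
    intro hvi
    subst hvi
    obtain ⟨t, ht, hEq2⟩ := hv1
    have hz : ((t + 1 : ℕ) : ZMod n) = 0 := by
      push_cast
      linear_combination hEq2
    exact hndvd (t + 1) (by omega) (by omega) hz
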